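/- The slot-sequential choice rule C̄ is substitutable: for all Y ⊆ X and contracts x ∈ Y and z ∉ Y, if x ∉ C̄(Y) then x ∉ C̄(Y ∪ {z}). -/
import Mathlib

open Finset
variable {X : Type*} [DecidableEq X] [Fintype X]

/-- From an offer set `Y`, select the `π`-maximal element of `Y ∪ {∅}`
(`none` plays the role of the null contract; higher `π`-value = higher priority). -/
noncomputable def pick (π : Option X → ℕ) (Y : Finset X) : Option X :=
  (((insert (none : Option X) (Y.image some)).toList).argmax π).join

/-- Slot-sequential choice: each slot selects the priority-maximal remaining contract. -/
noncomputable def chosen : List (Option X → ℕ) → Finset X → Finset X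
  | [], _ => ∅
  | π :: L, Y =>
    match pick π Y with
    | none => chosen L Y
    | some x => insert x (chosen L (Y.erase x))

/-- Remaining contracts after all slots in the list have selected. -/
noncomputable def remain : List (Option X → ℕ) → Finset X → Finset X
  | [], Y => Y
  | π :: L, Y =>
    match pick π Y with
    | none => remain L Y
    | some x => remain L (Y.erase x)


lemma pick_spec (π : Option X → ℕ) (Y : Finset X) :
    pick π Y ∈ insert (none : Option X) (Y.image some) ∧
      ∀ b ∈ insert (none : Option X) (Y.image some), π b ≤ π (pick π Y) := by
  set S := insert (none : Option X) (Y.image some)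
  have hne : S.toList ≠ [] := fun hcon =>
    Finset.insert_ne_empty _ _ (Finset.toList_eq_nil.mp hcon)
  obtain ⟨m, hm⟩ : ∃ m, S.toList.argmax π = some m := by
    cases h : S.toList.argmax π with
    | none => exact absurd (List.argmax_eq_none.mp h) hne
    | some m => exact ⟨m, rfl⟩
  have hpick : pick π Y = m := by simp [pick, S, hm]
  rw [hpick]
  constructor
  · rw [← Finset.mem_toList]; exact List.argmax_mem hm
  · intro b hb
    exact List.le_of_mem_argmax (Finset.mem_toList.mpr hb) hm

lemma pick_eq_of_max {π : Option X → ℕ} (hπ : Function.Injective π) {Y : Finset X}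
    {m : Option X} (hm : m ∈ insert (none : Option X) (Y.image some))
    (hmax : ∀ b ∈ insert (none : Option X) (Y.image some), π b ≤ π m) :
    pick π Y = m := by
  obtain ⟨h1, h2⟩ := pick_spec π Y
  exact hπ (le_antisymm (hmax _ h1) (h2 _ hm))

lemma pick_insert {π : Option X → ℕ} (hπ : Function.Injective π) (Y : Finset X) (z : X) :
    pick π (insert z Y) = pick π Y ∨ pick π (insert z Y) = some z := by
  have hset : insert (none : Option X) ((insert z Y).image some)
      = insert (some z) (insert (none : Option X) (Y.image some)) := by
    rw [Finset.image_insert]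
    exact Finset.insert_comm _ _ _
  obtain ⟨h1, h2⟩ := pick_spec π Y
  rcases le_or_gt (π (some z)) (π (pick π Y)) with hle | hlt
  · left
    apply pick_eq_of_max hπ
    · rw [hset]; exact Finset.mem_insert_of_mem h1
    · intro b hb
      rw [hset, Finset.mem_insert] at hb
      rcases hb with rfl | hb
      · exact hle
      · exact h2 _ hb
  · right
    apply pick_eq_of_max hπ
    · rw [hset]; exact Finset.mem_insert_self _ _
    · intro b hb
      rw [hset, Finset.mem_insert] at hb
      rcases hb with rfl | hb
      · exact le_rfl
      · exact le_of_lt (lt_of_le_of_lt (h2 _ hb) hlt)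

lemma pick_mem {π : Option X → ℕ} {Y : Finset X} {a : X} (h : pick π Y = some a) : a ∈ Y := by
  have := (pick_spec π Y).1
  rw [h, Finset.mem_insert] at this
  rcases this with h' | h'
  · exact absurd h' (by simp)
  · simpa using h'

/-- The slot-sequential choice rule is substitutable. -/
theorem chosen_substitutable (L : List (Option X → ℕ)) (hinj : ∀ π ∈ L, Function.Injective π)
    (Y : Finset X) (x z : X) (hx : x ∈ Y) (hz : z ∉ Y) (h : x ∉ chosen L Y) :
    x ∉ chosen L (insert z Y) := by
  induction L generalizing Y x z with
  | nil => simp [chosen]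
  | cons π L ih =>
    have hπ : Function.Injective π := hinj π (by simp)
    have hinj' : ∀ π ∈ L, Function.Injective π := fun p hp => hinj p (by simp [hp])
    have hxz : x ≠ z := fun e => hz (e ▸ hx)
    rcases pick_insert hπ Y z with heq | heqz
    · cases hp : pick π Y with
      | none =>
        rw [chosen, hp] at h
        rw [chosen, heq, hp]
        exact ih hinj' Y x z hx hz h
      | some a =>
        rw [chosen, hp] at h
        simp only [Finset.mem_insert, not_or] at h
        have ha : a ∈ Y := pick_mem hp
        have hza : z ≠ a := fun e => hz (e ▸ ha)
        rw [chosen, heq, hp]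
        show x ∉ insert a (chosen L ((insert z Y).erase a))
        simp only [Finset.mem_insert, not_or]
        refine ⟨h.1, ?_⟩
        rw [Finset.erase_insert_of_ne hza]
        exact ih hinj' (Y.erase a) x z (Finset.mem_erase.mpr ⟨h.1, hx⟩)
          (fun hmem => hz (Finset.mem_of_mem_erase hmem)) h.2
    · have hxY : x ∉ chosen L Y := by
        cases hp : pick π Y with
        | none => rw [chosen, hp] at h; exact h
        | some a =>
          rw [chosen, hp] at h
          simp only [Finset.mem_insert, not_or] at h
          have ha : a ∈ Y := pick_mem hp
          have := ih hinj' (Y.erase a) x a (Finset.mem_erase.mpr ⟨h.1, hx⟩)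
            (Finset.notMem_erase _ _) h.2
          rwa [Finset.insert_erase ha] at this
      rw [chosen, heqz]
      show x ∉ insert z (chosen L ((insert z Y).erase z))
      rw [Finset.erase_insert hz]
      simp only [Finset.mem_insert, not_or]
      exact ⟨hxz, hxY⟩
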